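/- There is no restriction from GHZ₂(3) ⊗ EPR₂(BC-wedge) to W(3) ⊗ EPR₂(BC-wedge): there do not exist linear maps M_A, M_B, M_C with (M_A⊗M_B⊗M_C)(φ) = ψ, where φ = (|000⟩+|111⟩)_{A₁B₁C₁} ⊗ (|00⟩+|11⟩)_{A₂C₂} ⊗ (|00⟩+|11⟩)_{B₂C₃} and ψ = (|100⟩+|010⟩+|001⟩)_{A₁B₁C₁} ⊗ (|00⟩+|11⟩)_{A₂C₂} ⊗ (|00⟩+|11⟩)_{B₂C₃}, with party A = A₁A₂ ≅ ℂ²⊗ℂ², party B = B₁B₂ ≅ ℂ²⊗ℂ², party C = C₁C₂C₃ ≅ ℂ²⊗ℂ²⊗ℂ². -/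

import Mathlib

set_option maxHeartbeats 1600000
set_option synthInstance.maxHeartbeats 1000000

open TensorProduct

noncomputable def ket (a : Fin 2) : Fin 2 → ℂ := Pi.single a 1

/-- Party Hilbert spaces: `A = A₁A₂ ≅ ℂ²⊗ℂ²`, `B = B₁B₂ ≅ ℂ²⊗ℂ²`,
`C = C₁C₂C₃ ≅ ℂ²⊗ℂ²⊗ℂ²`. -/
noncomputable abbrev HA := (Fin 2 → ℂ) ⊗[ℂ] (Fin 2 → ℂ)
noncomputable abbrev HB := (Fin 2 → ℂ) ⊗[ℂ] (Fin 2 → ℂ)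
noncomputable abbrev HC := (Fin 2 → ℂ) ⊗[ℂ] ((Fin 2 → ℂ) ⊗[ℂ] (Fin 2 → ℂ))

/-- `φ = GHZ₂(3)_{A₁B₁C₁} ⊗ EPR₂_{A₂C₂} ⊗ EPR₂_{B₂C₃}`, grouped by parties. -/
noncomputable def phiGHZ : HA ⊗[ℂ] (HB ⊗[ℂ] HC) :=
  ∑ g : Fin 2, ∑ p : Fin 2, ∑ q : Fin 2,
    (ket g ⊗ₜ[ℂ] ket p) ⊗ₜ[ℂ]
      ((ket g ⊗ₜ[ℂ] ket q) ⊗ₜ[ℂ] (ket g ⊗ₜ[ℂ] (ket p ⊗ₜ[ℂ] ket q)))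

/-- `ψ = W(3)_{A₁B₁C₁} ⊗ EPR₂_{A₂C₂} ⊗ EPR₂_{B₂C₃}`, grouped by parties. -/
noncomputable def psiW : HA ⊗[ℂ] (HB ⊗[ℂ] HC) :=
  ∑ p : Fin 2, ∑ q : Fin 2,
    ((ket 1 ⊗ₜ[ℂ] ket p) ⊗ₜ[ℂ]
        ((ket 0 ⊗ₜ[ℂ] ket q) ⊗ₜ[ℂ] (ket 0 ⊗ₜ[ℂ] (ket p ⊗ₜ[ℂ] ket q))) +
      (ket 0 ⊗ₜ[ℂ] ket p) ⊗ₜ[ℂ]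
        ((ket 1 ⊗ₜ[ℂ] ket q) ⊗ₜ[ℂ] (ket 0 ⊗ₜ[ℂ] (ket p ⊗ₜ[ℂ] ket q))) +
      (ket 0 ⊗ₜ[ℂ] ket p) ⊗ₜ[ℂ]
        ((ket 0 ⊗ₜ[ℂ] ket q) ⊗ₜ[ℂ] (ket 1 ⊗ₜ[ℂ] (ket p ⊗ₜ[ℂ] ket q))))

/-! ### Auxiliary matrix-level development -/

namespace GhzWAux

open Matrix

/-- Coordinates of `ψ`. -/
noncomputable def psix (a : Fin 2 × Fin 2) (b : Fin 2 × Fin 2) (c : Fin 2 × Fin 2 × Fin 2) : ℂ :=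
  ((if a.1 = 1 ∧ b.1 = 0 ∧ c.1 = 0 then (1:ℂ) else 0)
   + (if a.1 = 0 ∧ b.1 = 1 ∧ c.1 = 0 then 1 else 0)
   + (if a.1 = 0 ∧ b.1 = 0 ∧ c.1 = 1 then 1 else 0))
  * (if c.2.1 = a.2 then 1 else 0) * (if c.2.2 = b.2 then 1 else 0)

abbrev IA := Fin 2 × Fin 2
abbrev IC := Fin 2 × Fin 2 × Fin 2

/-- Slices of `φ` (as `B ⊗ C` matrices), as a function of the `A`-coefficient vector. -/
noncomputable def Phi (x : IA → ℂ) : Matrix IA IC ℂ :=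
  Matrix.of fun b c => if b.1 = c.1 ∧ b.2 = c.2.2 then x (b.1, c.2.1) else 0

/-- Slices of `ψ`. -/
noncomputable def Psi (y : IA → ℂ) : Matrix IA IC ℂ :=
  Matrix.of fun b c => ∑ a : IA, y a * psix a b c

lemma h2 : ∀ x : Fin 2, x = 0 ∨ x = 1 := by decide

lemma Phi_zero : Phi 0 = 0 := by ext b c; simp [Phi]

lemma Psi_entry (y : IA → ℂ) (b : IA) (c : IC) :
    Psi y b c = (if b.2 = c.2.2 then 1 else 0) *
      ((if b.1 = 0 ∧ c.1 = 0 then y (1, c.2.1) else 0) +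
       (if (b.1 = 1 ∧ c.1 = 0) ∨ (b.1 = 0 ∧ c.1 = 1) then y (0, c.2.1) else 0)) := by
  obtain ⟨b1, b2⟩ := b
  obtain ⟨c1, c2, c3⟩ := c
  simp only [Psi, Matrix.of_apply, Fintype.sum_prod_type, Fin.sum_univ_two]
  rcases h2 b1 with rfl | rfl <;> rcases h2 c1 with rfl | rfl <;>
    rcases h2 b2 with rfl | rfl <;> rcases h2 c2 with rfl | rfl <;>
    rcases h2 c3 with rfl | rfl <;>
    simp [psix, -Prod.mk_zero_zero, -Prod.mk_one_one] <;> ring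

lemma Psi_zero_iff (y : IA → ℂ) (h : Psi y = 0) : y = 0 := by
  funext a
  obtain ⟨a1, a2⟩ := a
  rcases h2 a1 with rfl | rfl
  · have := congrFun (congrFun h (1, 0)) (0, a2, 0)
    simpa [Psi_entry] using this
  · have := congrFun (congrFun h (0, 0)) (0, a2, 0)
    simpa [Psi_entry] using this

lemma low_rank_zero (y : IA → ℂ) (hr : (Psi y).rank ≤ 2) (p : Fin 2) : y (0, p) = 0 := by
  by_contra hne
  have hR : Psi y * (Matrix.of fun (c : IC) (b : IA) =>
      (if c.2.1 = p ∧ c.2.2 = b.2 then (1:ℂ) else 0) *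
      (if c.1 = 0 then (if b.1 = 0 then 0 else (y (0, p))⁻¹)
       else (if b.1 = 0 then (y (0, p))⁻¹ else -(y (1, p)) * (y (0, p))⁻¹ * (y (0, p))⁻¹))) = 1 := by
    ext b bt
    obtain ⟨b1, b2⟩ := b
    obtain ⟨t1, t2⟩ := bt
    have e0 : (0 : IA) = ((0:Fin 2),(0:Fin 2)) := rfl
    have e1 : (1 : IA) = ((1:Fin 2),(1:Fin 2)) := rfl
    rcases h2 p with rfl | rfl <;>
      rcases h2 b1 with rfl | rfl <;> rcases h2 b2 with rfl | rfl <;>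
      rcases h2 t1 with rfl | rfl <;> rcases h2 t2 with rfl | rfl <;>
      simp only [Matrix.mul_apply, Fintype.sum_prod_type, Fin.sum_univ_two,
          Psi_entry, Matrix.of_apply, Matrix.one_apply] <;>
      simp [Prod.ext_iff, -Prod.mk_zero_zero, -Prod.mk_one_one] <;>
      (try simp only [Prod.mk_zero_zero, Prod.mk_one_one] at hne ⊢) <;>
      (try field_simp) <;>
      (try ring)
  have h4 : (4 : ℕ) ≤ (Psi y).rank := by
    have := Matrix.rank_mul_le_left (Psi y) (Matrix.of fun (c : IC) (b : IA) =>
      (if c.2.1 = p ∧ c.2.2 = b.2 then (1:ℂ) else 0) *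
      (if c.1 = 0 then (if b.1 = 0 then 0 else (y (0, p))⁻¹)
       else (if b.1 = 0 then (y (0, p))⁻¹ else -(y (1, p)) * (y (0, p))⁻¹ * (y (0, p))⁻¹)))
    rw [hR] at this
    simpa using this
  omega

noncomputable def Pm (i : Fin 2) : Matrix IA (Fin 2) ℂ :=
  Matrix.of fun b j => if b.1 = i ∧ b.2 = j then (1:ℂ) else 0

noncomputable def Qm (i : Fin 2) : Matrix (Fin 2) IC ℂ :=
  Matrix.of fun j c => if c.1 = i ∧ c.2.1 = 0 ∧ c.2.2 = j then (1:ℂ) else 0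

lemma Phi_e_fact (i : Fin 2) :
    Phi (fun j => if j = (i, (0:Fin 2)) then 1 else 0) = Pm i * Qm i := by
  ext b c
  obtain ⟨b1, b2⟩ := b
  obtain ⟨c1, c2, c3⟩ := c
  rcases h2 i with rfl | rfl <;>
    rcases h2 b1 with rfl | rfl <;> rcases h2 b2 with rfl | rfl <;>
    rcases h2 c1 with rfl | rfl <;> rcases h2 c2 with rfl | rfl <;>
    rcases h2 c3 with rfl | rfl <;>
    simp [Phi, Pm, Qm, Matrix.mul_apply, Fin.sum_univ_two, Prod.ext_iff]

lemma Phi_sum_fact :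
    Phi (fun j => if j.2 = 0 then 1 else 0) *
      (Matrix.of fun (c : IC) (b : IA) =>
        if c.1 = b.1 ∧ c.2.1 = 0 ∧ c.2.2 = b.2 then (1:ℂ) else 0) = 1 := by
  ext b bt
  obtain ⟨b1, b2⟩ := b
  obtain ⟨t1, t2⟩ := bt
  rcases h2 b1 with rfl | rfl <;> rcases h2 b2 with rfl | rfl <;>
    rcases h2 t1 with rfl | rfl <;> rcases h2 t2 with rfl | rfl <;>
    simp [Phi, Matrix.mul_apply, Fintype.sum_prod_type, Fin.sum_univ_two,
      Matrix.one_apply, Prod.ext_iff]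

lemma Psi_fact (y : IA → ℂ) (hz : ∀ p, y (0, p) = 0) :
    Psi y = Pm 0 * (Matrix.of fun (j : Fin 2) (c : IC) =>
      if c.1 = 0 ∧ c.2.2 = j then y (1, c.2.1) else 0) := by
  ext b c
  obtain ⟨b1, b2⟩ := b
  obtain ⟨c1, c2, c3⟩ := c
  rcases h2 b1 with rfl | rfl <;> rcases h2 b2 with rfl | rfl <;>
    rcases h2 c1 with rfl | rfl <;> rcases h2 c2 with rfl | rfl <;>
    rcases h2 c3 with rfl | rfl <;>
    simp [Psi, Pm, psix, Matrix.mul_apply, Fintype.sum_prod_type, Fin.sum_univ_two,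
      Prod.ext_iff, hz, -Prod.mk_zero_zero, -Prod.mk_one_one]

section main
variable (A : Matrix IA IA ℂ) (B : Matrix IA IA ℂ) (C : Matrix IC IC ℂ)

lemma key (E : ∀ a b c, (∑ g : Fin 2, ∑ p : Fin 2, ∑ q : Fin 2,
      C c (g,p,q) * B b (g,q) * A a (g,p)) = psix a b c) (y : IA → ℂ) :
    Psi y = B * Phi (Matrix.vecMul y A) * Cᵀ := by
  ext b c
  simp only [Psi, Matrix.of_apply, ← E]
  obtain ⟨b1, b2⟩ := b
  obtain ⟨c1, c2, c3⟩ := c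
  rcases h2 b1 with rfl | rfl <;> rcases h2 b2 with rfl | rfl <;>
    rcases h2 c1 with rfl | rfl <;> rcases h2 c2 with rfl | rfl <;>
    rcases h2 c3 with rfl | rfl <;>
    simp [Matrix.mul_apply, Matrix.transpose_apply, Phi, Matrix.of_apply,
      Matrix.vecMul, dotProduct, Fintype.sum_prod_type, Fin.sum_univ_two] <;>
    ring

lemma Bright (E : ∀ a b c, (∑ g : Fin 2, ∑ p : Fin 2, ∑ q : Fin 2,
      C c (g,p,q) * B b (g,q) * A a (g,p)) = psix a b c) :
    ∃ B' : Matrix IA IA ℂ, B * B' = 1 := by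
  refine ⟨Matrix.of fun gq bt => ∑ p : Fin 2,
    A (if bt.1 = 0 then ((1:Fin 2),(0:Fin 2)) else ((0:Fin 2),(0:Fin 2))) (gq.1, p)
      * C ((0:Fin 2), (0:Fin 2), bt.2) (gq.1, p, gq.2), ?_⟩
  ext b bt
  obtain ⟨b1, b2⟩ := b
  obtain ⟨t1, t2⟩ := bt
  have e := E (if t1 = 0 then ((1:Fin 2),(0:Fin 2)) else ((0:Fin 2),(0:Fin 2)))
    (b1, b2) ((0:Fin 2), (0:Fin 2), t2)
  rcases h2 t1 with rfl | rfl <;> rcases h2 b1 with rfl | rfl <;>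
    rcases h2 t2 with rfl | rfl <;> rcases h2 b2 with rfl | rfl <;>
    (norm_num [psix, Fin.sum_univ_two] at e;
     simp only [Matrix.mul_apply, Matrix.of_apply, Fintype.sum_prod_type,
       Fin.sum_univ_two, Matrix.one_apply, Prod.mk.injEq];
     norm_num;
     linear_combination e)

lemma Cright (E : ∀ a b c, (∑ g : Fin 2, ∑ p : Fin 2, ∑ q : Fin 2,
      C c (g,p,q) * B b (g,q) * A a (g,p)) = psix a b c) :
    ∃ C' : Matrix IC IC ℂ, C * C' = 1 := by
  refine ⟨Matrix.of fun gpq ct =>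
    A (if ct.1 = 0 then ((1:Fin 2), ct.2.1) else ((0:Fin 2), ct.2.1)) (gpq.1, gpq.2.1)
      * B ((0:Fin 2), ct.2.2) (gpq.1, gpq.2.2), ?_⟩
  ext c ct
  obtain ⟨c1, c2, c3⟩ := c
  obtain ⟨t1, t2, t3⟩ := ct
  have e := E (if t1 = 0 then ((1:Fin 2), t2) else ((0:Fin 2), t2))
    ((0:Fin 2), t3) (c1, c2, c3)
  rcases h2 t1 with rfl | rfl <;> rcases h2 c1 with rfl | rfl <;>
    rcases h2 t2 with rfl | rfl <;> rcases h2 c2 with rfl | rfl <;>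
    rcases h2 t3 with rfl | rfl <;> rcases h2 c3 with rfl | rfl <;>
    (norm_num [psix, Fin.sum_univ_two] at e;
     simp only [Matrix.mul_apply, Matrix.of_apply, Fintype.sum_prod_type,
       Fin.sum_univ_two, Matrix.one_apply, Prod.mk.injEq];
     norm_num;
     linear_combination e)

theorem no_matrices
    (E : ∀ a b c, (∑ g : Fin 2, ∑ p : Fin 2, ∑ q : Fin 2,
      C c (g,p,q) * B b (g,q) * A a (g,p)) = psix a b c) : False := by
  have hinj : Function.Injective A.vecMulLinear := by
    rw [← LinearMap.ker_eq_bot, LinearMap.ker_eq_bot']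
    intro y hy
    have hy' : Matrix.vecMul y A = 0 := hy
    apply Psi_zero_iff
    rw [key A B C E y, hy', Phi_zero]
    simp
  have hsurj := LinearMap.surjective_of_injective hinj
  obtain ⟨y0, hy0⟩ := hsurj (fun j => if j = (((0:Fin 2)), (0:Fin 2)) then 1 else 0)
  obtain ⟨y1, hy1⟩ := hsurj (fun j => if j = (((1:Fin 2)), (0:Fin 2)) then 1 else 0)
  have hy0' : Matrix.vecMul y0 A = (fun j => if j = (((0:Fin 2)), (0:Fin 2)) then 1 else 0) := hy0
  have hy1' : Matrix.vecMul y1 A = (fun j => if j = (((1:Fin 2)), (0:Fin 2)) then 1 else 0) := hy1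
  obtain ⟨B', hB'⟩ := Bright A B C E
  obtain ⟨C', hC'⟩ := Cright A B C E
  have rank_le : ∀ (y : IA → ℂ) (i : Fin 2),
      Matrix.vecMul y A = (fun j => if j = ((i : Fin 2), (0:Fin 2)) then 1 else 0) →
      (Psi y).rank ≤ 2 := by
    intro y i hy
    rw [key A B C E y, hy, Phi_e_fact i]
    calc (B * (Pm i * Qm i) * Cᵀ).rank = ((B * Pm i) * (Qm i * Cᵀ)).rank := by
          simp only [Matrix.mul_assoc]
      _ ≤ (B * Pm i).rank := Matrix.rank_mul_le_left _ _
      _ ≤ 2 := by simpa using Matrix.rank_le_card_width (B * Pm i)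
  have z0 := low_rank_zero y0 (rank_le y0 0 hy0')
  have z1 := low_rank_zero y1 (rank_le y1 1 hy1')
  set yS : IA → ℂ := y0 + y1 with hyS
  have zS : ∀ p, yS (0, p) = 0 := by
    intro p; simp [hyS, Pi.add_apply, z0 p, z1 p]
  have hup : (Psi yS).rank ≤ 2 := by
    rw [Psi_fact yS zS]
    calc (Pm 0 * _).rank ≤ (Pm 0).rank := Matrix.rank_mul_le_left _ _
      _ ≤ 2 := by simpa using Matrix.rank_le_card_width (Pm 0)
  have hvS : Matrix.vecMul yS A = (fun j => if j.2 = 0 then 1 else 0) := by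
    rw [hyS, Matrix.add_vecMul, hy0', hy1']
    funext j
    obtain ⟨j1, j2⟩ := j
    rcases h2 j1 with rfl | rfl <;> rcases h2 j2 with rfl | rfl <;>
      norm_num [Prod.ext_iff]
  have hBB : B' * B = 1 := mul_eq_one_comm.mp hB'
  have hCC : Cᵀ * C'ᵀ = 1 := by
    rw [← Matrix.transpose_mul, mul_eq_one_comm.mp hC', Matrix.transpose_one]
  have hfact : Phi (fun j => if j.2 = 0 then 1 else 0) = B' * Psi yS * C'ᵀ := by
    rw [key A B C E yS, hvS]
    calc Phi (fun j => if j.2 = 0 then 1 else 0)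
        = (B' * B) * Phi (fun j => if j.2 = 0 then 1 else 0) * (Cᵀ * C'ᵀ) := by
          rw [hBB, hCC, Matrix.one_mul, Matrix.mul_one]
      _ = B' * (B * Phi (fun j => if j.2 = 0 then 1 else 0) * Cᵀ) * C'ᵀ := by
          simp only [Matrix.mul_assoc]
  have hlow : 4 ≤ (Phi (fun j => if j.2 = 0 then 1 else 0)).rank := by
    have h1 := Matrix.rank_mul_le_left (Phi (fun j => if j.2 = 0 then 1 else 0))
      (Matrix.of fun (c : IC) (b : IA) =>
        if c.1 = b.1 ∧ c.2.1 = 0 ∧ c.2.2 = b.2 then (1:ℂ) else 0)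
    rw [Phi_sum_fact] at h1
    simpa using h1
  have hup2 : (Phi (fun j => if j.2 = 0 then 1 else 0)).rank ≤ 2 := by
    rw [hfact]
    calc (B' * Psi yS * C'ᵀ).rank ≤ (B' * Psi yS).rank := Matrix.rank_mul_le_left _ _
      _ ≤ (Psi yS).rank := Matrix.rank_mul_le_right _ _
      _ ≤ 2 := hup
  omega
end main

/-! ### From the tensor hypothesis to the matrix equation -/

noncomputable def b2 : Module.Basis (Fin 2) ℂ (Fin 2 → ℂ) := Pi.basisFun ℂ (Fin 2)
noncomputable def bA : Module.Basis (Fin 2 × Fin 2) ℂ HA := b2.tensorProduct b2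
noncomputable def bC : Module.Basis (Fin 2 × (Fin 2 × Fin 2)) ℂ HC := b2.tensorProduct (b2.tensorProduct b2)
noncomputable def bF : Module.Basis ((Fin 2 × Fin 2) × ((Fin 2 × Fin 2) × (Fin 2 × (Fin 2 × Fin 2)))) ℂ
    (HA ⊗[ℂ] (HB ⊗[ℂ] HC)) := bA.tensorProduct (bA.tensorProduct bC)

lemma ket_tmul (g p : Fin 2) : ket g ⊗ₜ[ℂ] ket p = bA (g, p) := by
  simp [ket, bA, b2, Module.Basis.tensorProduct_apply]

lemma ket_tmul3' (g p q : Fin 2) : ket g ⊗ₜ[ℂ] bA (p, q) = bC (g, (p, q)) := by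
  simp [ket, bA, bC, b2, Module.Basis.tensorProduct_apply]

lemma rhs_eval (a : Fin 2 × Fin 2) (b : Fin 2 × Fin 2) (c : Fin 2 × Fin 2 × Fin 2) :
    (∑ x : Fin 2, ∑ x_1 : Fin 2,
        (((((if ((0:Fin 2), x, x_1) = c then (1:ℂ) else 0) * if ((0:Fin 2), x_1) = b then 1 else 0) * if ((1:Fin 2), x) = a then 1 else 0) +
            ((if ((0:Fin 2), x, x_1) = c then 1 else 0) * if ((1:Fin 2), x_1) = b then 1 else 0) * if ((0:Fin 2), x) = a then 1 else 0) +
          ((if ((1:Fin 2), x, x_1) = c then 1 else 0) * if ((0:Fin 2), x_1) = b then 1 else 0) * if ((0:Fin 2), x) = a then 1 else 0)) = psix a b c := by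
  obtain ⟨a1, a2⟩ := a
  obtain ⟨b1, b2⟩ := b
  obtain ⟨c1, c2, c3⟩ := c
  simp only [psix, Fin.sum_univ_two, Prod.mk.injEq]
  rcases h2 a1 with rfl | rfl <;> rcases h2 a2 with rfl | rfl <;>
    rcases h2 b1 with rfl | rfl <;> rcases h2 b2 with rfl | rfl <;>
    rcases h2 c1 with rfl | rfl <;> rcases h2 c2 with rfl | rfl <;>
    rcases h2 c3 with rfl | rfl <;> norm_num

end GhzWAux

open GhzWAux in
/-- There is no restriction from `GHZ₂(3) ⊗ EPR₂ ⊗ EPR₂` to `W(3) ⊗ EPR₂ ⊗ EPR₂`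
with the indicated grouping into parties `A`, `B`, `C`. -/
theorem no_restriction_GHZ_EPR_to_W_EPR :
    ¬ ∃ (MA : HA →ₗ[ℂ] HA) (MB : HB →ₗ[ℂ] HB) (MC : HC →ₗ[ℂ] HC),
        TensorProduct.map MA (TensorProduct.map MB MC) phiGHZ = psiW := by
  rintro ⟨MA, MB, MC, h⟩
  refine no_matrices (fun a gp => (bA.repr (MA (bA gp))) a)
    (fun b gq => (bA.repr (MB (bA gq))) b)
    (fun c gpq => (bC.repr (MC (bC gpq))) c) ?_
  intro a b c
  have h0 := congrArg bF.repr h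
  have h' := DFunLike.congr_fun h0 (a, (b, c))
  simp only [phiGHZ, psiW, map_sum, TensorProduct.map_tmul, map_add,
    Finsupp.coe_finset_sum, Finset.sum_apply, Finsupp.coe_add, Pi.add_apply,
    ket_tmul, ket_tmul3', bF, Module.Basis.tensorProduct_repr_tmul_apply,
    Module.Basis.repr_self, Finsupp.single_apply, smul_eq_mul] at h'
  rw [show (∑ g : Fin 2, ∑ p : Fin 2, ∑ q : Fin 2,
      (bC.repr (MC (bC (g, p, q)))) c * (bA.repr (MB (bA (g, q)))) b
        * (bA.repr (MA (bA (g, p)))) a) = _ from h']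
  exact rhs_eval a b c
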